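/- Every surjection in sC_Λ can be factorised as a (possibly transfinite inverse limit of a) composition of small extensions, and every acyclic surjection in sC_Λ can be factorised as a composition of acyclic small extensions. -/

import Mathlib

open CategoryTheory Simplicial Opposite

/-! ## The category `C_Λ` of local Artinian `Λ`-algebras with residue field `k`,
and the category `sC_Λ` of Artinian simplicial local `Λ`-algebras. -/

variable (Λ : Type) [CommRing Λ] [IsLocalRing Λ] [IsNoetherianRing Λ]
  [IsAdicComplete (IsLocalRing.maximalIdeal Λ) Λ]

/-- The residue field `k` of `Λ`. -/
abbrev resK := IsLocalRing.ResidueField Λ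

/-- An object of `C_Λ`: a local Artinian `Λ`-algebra whose residue field is
(canonically isomorphic to) `k`. -/
structure ArtAlg where
  carrier : Type
  [commRing : CommRing carrier]
  [algebra : Algebra Λ carrier]
  [artinian : IsArtinianRing carrier]
  [isLocal : IsLocalRing carrier]
  [localHom : IsLocalHom (algebraMap Λ carrier)]
  residue_bij : Function.Bijective
    (IsLocalRing.ResidueField.map (algebraMap Λ carrier))

attribute [instance] ArtAlg.commRing ArtAlg.algebra ArtAlg.artinian
  ArtAlg.isLocal ArtAlg.localHom

instance : Category (ArtAlg Λ) where
  Hom A B := A.carrier →ₐ[Λ] B.carrier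
  id A := AlgHom.id Λ A.carrier
  comp f g := g.comp f

/-- Interpret a morphism of `C_Λ` as an algebra homomorphism. -/
def ArtAlg.toAlg {Λ : Type} [CommRing Λ] [IsLocalRing Λ] [IsNoetherianRing Λ]
    [IsAdicComplete (IsLocalRing.maximalIdeal Λ) Λ] {A B : ArtAlg Λ}
    (f : A ⟶ B) : A.carrier →ₐ[Λ] B.carrier := f

/-- A morphism in `C_Λ` is surjective if its underlying map is. -/
def ArtAlg.Surjective {Λ : Type} [CommRing Λ] [IsLocalRing Λ] [IsNoetherianRing Λ]
    [IsAdicComplete (IsLocalRing.maximalIdeal Λ) Λ] {A B : ArtAlg Λ}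
    (f : A ⟶ B) : Prop := Function.Surjective (ArtAlg.toAlg f)

/-- The ideal `m(A)² + μ·m(A)` of `A`, by which one quotients the maximal ideal
to obtain the cotangent space `cot A = m(A)/(m(A)² + μ·m(A))`. -/
def cotDenom (R : ArtAlg Λ) : Ideal R.carrier :=
  (IsLocalRing.maximalIdeal R.carrier) ^ 2 ⊔
    ((IsLocalRing.maximalIdeal Λ).map (algebraMap Λ R.carrier) *
      IsLocalRing.maximalIdeal R.carrier)

/-- Vanishing, in degree `n`, of the normalisation `N(cot A)` of the cotangent
space of a simplicial object `X` of `C_Λ`: the normalisation in degree `n` is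
`⋂_{i>0} ker(∂ᵢ : (cot A)_n → (cot A)_{n-1})`. -/
def NormCotVanish (X : SimplicialObject (ArtAlg Λ)) : ℕ → Prop := fun n => match n with
  | 0 => ∀ x ∈ IsLocalRing.maximalIdeal (X.obj (op ⦋0⦌)).carrier,
      x ∈ cotDenom Λ (X.obj (op ⦋0⦌))
  | (n + 1) => ∀ x ∈ IsLocalRing.maximalIdeal (X.obj (op ⦋n + 1⦌)).carrier,
      (∀ i : Fin (n + 1), ArtAlg.toAlg (X.δ i.succ) x ∈ cotDenom Λ (X.obj (op ⦋n⦌))) →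
        x ∈ cotDenom Λ (X.obj (op ⦋n + 1⦌))

/-- An object of `sC_Λ`: an Artinian simplicial local `Λ`-algebra with residue
field `k`, i.e. a simplicial object of `C_Λ` whose normalised cotangent space
is concentrated in finitely many degrees and whose maximal ideal is (uniformly)
nilpotent (cf. Lemma 1.3 of the paper). -/
structure SArtAlg where
  X : SimplicialObject (ArtAlg Λ)
  nilpotent : ∃ n > 0, ∀ m : SimplexCategoryᵒᵖ,
    (IsLocalRing.maximalIdeal (X.obj m).carrier) ^ n = ⊥
  cotFinite : ∃ N : ℕ, ∀ n ≥ N, NormCotVanish Λ X n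

instance : Category (SArtAlg Λ) where
  Hom A B := A.X ⟶ B.X
  id A := 𝟙 A.X
  comp f g := f ≫ g

variable {Λ}

/-- The algebra homomorphism underlying a morphism of `sC_Λ` in simplicial degree `m`. -/
def SArtAlg.app {A B : SArtAlg Λ} (f : A ⟶ B) (m : SimplexCategoryᵒᵖ) :
    (A.X.obj m).carrier →ₐ[Λ] (B.X.obj m).carrier :=
  ArtAlg.toAlg (NatTrans.app f m)

/-- A morphism of `sC_Λ` is surjective if it is levelwise surjective. -/
def SArtAlg.Surj {A B : SArtAlg Λ} (f : A ⟶ B) : Prop :=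
  ∀ m, Function.Surjective (SArtAlg.app f m)

/-- Cycles for the Moore complex of a simplicial algebra:
`Z_i = {x ∈ A_i | ∂_j x = 0 for all j}` (in degrees `i > 0`), `Z_0 = A_0`. -/
def SArtAlg.isCycle (A : SArtAlg Λ) : ∀ i : ℕ, (A.X.obj (op ⦋i⦌)).carrier → Prop :=
  fun i x => match i, x with
  | 0, _ => True
  | (i + 1), x => ∀ j : Fin (i + 2), ArtAlg.toAlg (A.X.δ j) x = 0

/-- The boundary relation for the Moore complex: `x ~ y` iff `x - y = ∂₀ h` for
some `h` killed by all the other face maps. -/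
def SArtAlg.mooreRel (A : SArtAlg Λ) (i : ℕ)
    (x y : {z : (A.X.obj (op ⦋i⦌)).carrier // A.isCycle i z}) : Prop :=
  ∃ h : (A.X.obj (op ⦋i + 1⦌)).carrier,
    (∀ j : Fin (i + 1), ArtAlg.toAlg (A.X.δ j.succ) h = 0) ∧
      ArtAlg.toAlg (A.X.δ (0 : Fin (i + 2))) h = x.1 - y.1

/-- The homotopy group `π_i(A)` of a simplicial algebra, computed via the Moore complex. -/
def SArtAlg.pi (A : SArtAlg Λ) (i : ℕ) : Type := Quot (A.mooreRel i)

lemma SArtAlg.app_naturality {A B : SArtAlg Λ} (f : A ⟶ B) {m m' : SimplexCategoryᵒᵖ}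
    (g : m ⟶ m') (x : (A.X.obj m).carrier) :
    SArtAlg.app f m' (ArtAlg.toAlg (A.X.map g) x) =
      ArtAlg.toAlg (B.X.map g) (SArtAlg.app f m x) := by
  have h := NatTrans.naturality (self := f) g
  show ArtAlg.toAlg (A.X.map g ≫ NatTrans.app f m') x =
    ArtAlg.toAlg (NatTrans.app f m ≫ B.X.map g) x
  rw [h]

/-- The map induced by a morphism of `sC_Λ` on homotopy groups. -/
def SArtAlg.piMap {A B : SArtAlg Λ} (f : A ⟶ B) (i : ℕ) :
    A.pi i → B.pi i := by
  refine Quot.map (fun x => ⟨SArtAlg.app f (op ⦋i⦌) x.1, ?_⟩) ?_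
  · cases i with
    | zero => trivial
    | succ i =>
      intro j
      have h1 := SArtAlg.app_naturality f (g := (SimplexCategory.δ j).op) x.1
      have h2 : ArtAlg.toAlg (A.X.map (SimplexCategory.δ j).op) x.1 = 0 := x.2 j
      show ArtAlg.toAlg (B.X.map (SimplexCategory.δ j).op)
        (SArtAlg.app f (op ⦋i + 1⦌) x.1) = 0
      rw [← h1, h2, map_zero]
  · rintro x y ⟨h, hker, h0⟩
    refine ⟨SArtAlg.app f (op ⦋i + 1⦌) h, fun j => ?_, ?_⟩
    · have h1 := SArtAlg.app_naturality f (g := (SimplexCategory.δ j.succ).op) h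
      have h2 : ArtAlg.toAlg (A.X.map (SimplexCategory.δ j.succ).op) h = 0 := hker j
      show ArtAlg.toAlg (B.X.map (SimplexCategory.δ j.succ).op)
        (SArtAlg.app f (op ⦋i + 1⦌) h) = 0
      rw [← h1, h2, map_zero]
    · have h1 := SArtAlg.app_naturality f
        (g := (SimplexCategory.δ (0 : Fin (i + 2))).op) h
      have h2 : ArtAlg.toAlg (A.X.map (SimplexCategory.δ (0 : Fin (i + 2))).op) h
        = x.1 - y.1 := h0
      show ArtAlg.toAlg (B.X.map (SimplexCategory.δ (0 : Fin (i + 2))).op)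
        (SArtAlg.app f (op ⦋i + 1⦌) h) = _
      rw [← h1, h2, map_sub]

/-- A morphism of `sC_Λ` is acyclic if it induces isomorphisms on all homotopy groups. -/
def SArtAlg.Acyclic {A B : SArtAlg Λ} (f : A ⟶ B) : Prop :=
  ∀ i, Function.Bijective (SArtAlg.piMap f i)

/-- A small extension in `sC_Λ`: a surjection whose kernel `I` satisfies `m(A)·I = 0`. -/
def SArtAlg.SmallExt {A B : SArtAlg Λ} (f : A ⟶ B) : Prop :=
  SArtAlg.Surj f ∧ ∀ m, (IsLocalRing.maximalIdeal (A.X.obj m).carrier) *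
    RingHom.ker (SArtAlg.app f m).toRingHom = ⊥

/-- An acyclic small extension. -/
def SArtAlg.AcySmallExt {A B : SArtAlg Λ} (f : A ⟶ B) : Prop :=
  SArtAlg.SmallExt f ∧ SArtAlg.Acyclic f

/-! ## Statement 1: factorisation of surjections into small extensions -/

section Statement1


/-- The data of a factorisation of `f : A ⟶ B` as the (possibly infinite,
i.e. inverse limit of a) composition of a tower `⋯ ⟶ C 2 ⟶ C 1 ⟶ C 0 ≅ B`
of morphisms in `sC_Λ`:  `A` maps compatibly onto the tower, and is recovered
as the inverse limit of the tower (levelwise in each simplicial degree). -/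
structure TowerFactorisation {A B : SArtAlg Λ} (f : A ⟶ B) where
  C : ℕ → SArtAlg Λ
  g : ∀ j : ℕ, C (j + 1) ⟶ C j
  p : ∀ j : ℕ, A ⟶ C j
  e : C 0 ≅ B
  compat : ∀ j, p (j + 1) ≫ g j = p j
  factors : p 0 ≫ e.hom = f
  isLimit : ∀ m : SimplexCategoryᵒᵖ,
    Function.Bijective
      (fun a : ((A.X.obj m).carrier) =>
        (⟨fun j => SArtAlg.app (p j) m a,
          fun j => (congrArg (fun h => SArtAlg.app h m a) (compat j)).symm ▸ rfl⟩ :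
          {s : ∀ j, ((C j).X.obj m).carrier //
            ∀ j, SArtAlg.app (g j) m (s (j + 1)) = s j}))

namespace SEP

open IsLocalRing

variable {Λ : Type} [CommRing Λ] [IsLocalRing Λ] [IsNoetherianRing Λ]
  [IsAdicComplete (IsLocalRing.maximalIdeal Λ) Λ]

/-- The underlying type of a level of a simplicial algebra. -/
abbrev lvl (A : SArtAlg Λ) (m : SimplexCategoryᵒᵖ) : Type := (A.X.obj m).carrier

lemma toAlg_comp {R S T : ArtAlg Λ} (f : R ⟶ S) (g : S ⟶ T) (x : R.carrier) :
    ArtAlg.toAlg (f ≫ g) x = ArtAlg.toAlg g (ArtAlg.toAlg f x) := rfl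

lemma toAlg_congr {R S : ArtAlg Λ} {f g : R ⟶ S} (h : f = g) (x : R.carrier) :
    ArtAlg.toAlg f x = ArtAlg.toAlg g x := by rw [h]

lemma toAlg_id {R : ArtAlg Λ} (x : R.carrier) : ArtAlg.toAlg (𝟙 R) x = x := rfl

variable (A : SArtAlg Λ)

/-- First simplicial identity, pointwise. -/
lemma d_d {m : ℕ} {i j : Fin (m + 2)} (H : i ≤ j) (x : lvl A (op ⦋m + 2⦌)) :
    ArtAlg.toAlg (A.X.δ i) (ArtAlg.toAlg (A.X.δ j.succ) x)
      = ArtAlg.toAlg (A.X.δ j) (ArtAlg.toAlg (A.X.δ i.castSucc) x) := by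
  rw [← toAlg_comp, ← toAlg_comp]
  exact toAlg_congr (A.X.δ_comp_δ H) x

/-- Faces of a `δ₀`-boundary, pointwise. -/
lemma d_d0 {m : ℕ} (j : Fin (m + 2)) (x : lvl A (op ⦋m + 2⦌)) :
    ArtAlg.toAlg (A.X.δ j) (ArtAlg.toAlg (A.X.δ (0 : Fin (m + 3))) x)
      = ArtAlg.toAlg (A.X.δ (0 : Fin (m + 2))) (ArtAlg.toAlg (A.X.δ j.succ) x) := by
  have h := d_d A (Fin.zero_le j) x
  rw [Fin.castSucc_zero] at h
  exact h.symm

lemma d_s_succ {m : ℕ} (i : Fin (m + 1)) (x : lvl A (op ⦋m⦌)) :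
    ArtAlg.toAlg (A.X.δ i.succ) (ArtAlg.toAlg (A.X.σ i) x) = x := by
  rw [← toAlg_comp]
  rw [toAlg_congr (A.X.δ_comp_σ_succ) x]
  rfl

lemma d_s_gt {m : ℕ} {i : Fin (m + 2)} {j : Fin (m + 1)} (H : Fin.castSucc j < i)
    (x : lvl A (op ⦋m + 1⦌)) :
    ArtAlg.toAlg (A.X.δ i.succ) (ArtAlg.toAlg (A.X.σ (Fin.castSucc j)) x)
      = ArtAlg.toAlg (A.X.σ j) (ArtAlg.toAlg (A.X.δ i) x) := by
  rw [← toAlg_comp, ← toAlg_comp]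
  exact toAlg_congr (A.X.δ_comp_σ_of_gt H) x

/-- A simplicial ideal of `A`: a functorial family of ideals contained in the
maximal ideals. -/
structure SIdeal (A : SArtAlg Λ) where
  I : ∀ m : SimplexCategoryᵒᵖ, Ideal (lvl A m)
  map_mem' : ∀ {m m' : SimplexCategoryᵒᵖ} (g : m ⟶ m') {x : lvl A m},
    x ∈ I m → ArtAlg.toAlg (A.X.map g) x ∈ I m'
  le_max' : ∀ m, I m ≤ IsLocalRing.maximalIdeal (lvl A m)

variable {A}

lemma SIdeal.d_mem (J : SIdeal A) {n : ℕ} (i : Fin (n + 2)) {x : lvl A (op ⦋n + 1⦌)}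
    (hx : x ∈ J.I (op ⦋n + 1⦌)) : ArtAlg.toAlg (A.X.δ i) x ∈ J.I (op ⦋n⦌) :=
  J.map_mem' _ hx

lemma SIdeal.s_mem (J : SIdeal A) {n : ℕ} (i : Fin (n + 1)) {x : lvl A (op ⦋n⦌)}
    (hx : x ∈ J.I (op ⦋n⦌)) : ArtAlg.toAlg (A.X.σ i) x ∈ J.I (op ⦋n + 1⦌) :=
  J.map_mem' _ hx

/-- The normalisation lemma (CORE-A): an element all of whose faces `δ_{i+1}`
lie in a simplicial ideal `J` can be corrected, modulo `J`, to an element all of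
whose faces `δ_{i+1}` vanish. -/
theorem coreA_aux (J : SIdeal A) {n : ℕ} (t : ℕ) :
    ∀ x : lvl A (op ⦋n + 1⦌),
    (∀ i : Fin (n + 1), (i.val < t → ArtAlg.toAlg (A.X.δ i.succ) x ∈ J.I (op ⦋n⦌)) ∧
      (t ≤ i.val → ArtAlg.toAlg (A.X.δ i.succ) x = 0)) →
    ∃ y : lvl A (op ⦋n + 1⦌), x - y ∈ J.I (op ⦋n + 1⦌) ∧
      ∀ i : Fin (n + 1), ArtAlg.toAlg (A.X.δ i.succ) y = 0 := by
  induction t with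
  | zero =>
    intro x hx
    exact ⟨x, by simpa using (J.I _).zero_mem, fun i => (hx i).2 (Nat.zero_le _)⟩
  | succ t IH =>
    intro x hx
    by_cases ht : n + 1 ≤ t
    · -- no face has index ≥ t, so the hypotheses for `t` already hold
      refine IH x (fun i => ⟨fun h => (hx i).1 (by omega), fun h => ?_⟩)
      exact absurd (lt_of_le_of_lt h i.isLt) (by omega)
    · -- kill the face with index t
      push_neg at ht
      set i₀ : Fin (n + 1) := ⟨t, ht⟩ with hi₀
      set w : lvl A (op ⦋n⦌) := ArtAlg.toAlg (A.X.δ i₀.succ) x with hw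
      have hwJ : w ∈ J.I (op ⦋n⦌) := (hx i₀).1 (by simp [hi₀])
      set x' : lvl A (op ⦋n + 1⦌) := x - ArtAlg.toAlg (A.X.σ i₀) w with hx'
      have hcorr : ArtAlg.toAlg (A.X.σ i₀) w ∈ J.I (op ⦋n + 1⦌) := J.s_mem i₀ hwJ
      have hfaces : ∀ i : Fin (n + 1),
          (i.val < t → ArtAlg.toAlg (A.X.δ i.succ) x' ∈ J.I (op ⦋n⦌)) ∧
          (t ≤ i.val → ArtAlg.toAlg (A.X.δ i.succ) x' = 0) := by
        intro i
        constructor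
        · intro hit
          have h1 : ArtAlg.toAlg (A.X.δ i.succ) x ∈ J.I (op ⦋n⦌) := (hx i).1 (by omega)
          have h2 : ArtAlg.toAlg (A.X.δ i.succ) (ArtAlg.toAlg (A.X.σ i₀) w) ∈ J.I (op ⦋n⦌) :=
            J.map_mem' _ (J.map_mem' _ hwJ)
          rw [hx', map_sub]
          exact sub_mem h1 h2
        · intro hti
          rcases eq_or_lt_of_le hti with heq | hlt
          · -- i = i₀ : this face dies exactly
            have hii : i = i₀ := by apply Fin.ext; simp [hi₀, ← heq]
            rw [hii, hx', map_sub, d_s_succ, ← hw, sub_self]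
          · -- i > i₀ : both terms vanish
            have h1 : ArtAlg.toAlg (A.X.δ i.succ) x = 0 := (hx i).2 (by omega)
            -- for the correction term we need n ≥ 1
            obtain ⟨m, rfl⟩ : ∃ m, n = m + 1 := ⟨n - 1, by omega⟩
            set j : Fin (m + 1) := ⟨t, by omega⟩ with hj
            have hji : i₀ = Fin.castSucc j := by apply Fin.ext; simp [hi₀, hj]
            have hlt' : Fin.castSucc j < i := by
              rw [← hji]; exact Fin.lt_def.2 (by simpa [hi₀] using hlt)
            rw [hx', map_sub, h1, hji, d_s_gt A hlt']
            -- now compute δ_i w = δ_i (δ_{i₀.succ} x) = δ_{t+1} (δ_{i.succ} x) = 0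
            have hi' : (Fin.castSucc (⟨t + 1, by omega⟩ : Fin (m + 2)) : Fin (m + 3))
                = i₀.succ := by apply Fin.ext; simp [hi₀]
            have hdd := d_d A (i := (⟨t + 1, by omega⟩ : Fin (m + 2))) (j := i)
              (by rw [Fin.le_def]; simp; omega) x
            rw [hi'] at hdd
            have : ArtAlg.toAlg (A.X.δ i) w = 0 := by
              rw [hw, ← hdd, h1, map_zero]
            rw [this, map_zero, zero_sub, neg_eq_zero]
      obtain ⟨y, hy1, hy2⟩ := IH x' hfaces
      refine ⟨y, ?_, hy2⟩
      have : x - y = (x - x') + (x' - y) := by ring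
      rw [this]
      exact add_mem (by rw [hx']; simpa using hcorr) hy1

theorem coreA (J : SIdeal A) {n : ℕ} (x : lvl A (op ⦋n + 1⦌))
    (hx : ∀ i : Fin (n + 1), ArtAlg.toAlg (A.X.δ i.succ) x ∈ J.I (op ⦋n⦌)) :
    ∃ y : lvl A (op ⦋n + 1⦌), x - y ∈ J.I (op ⦋n + 1⦌) ∧
      ∀ i : Fin (n + 1), ArtAlg.toAlg (A.X.δ i.succ) y = 0 :=
  coreA_aux J (n + 1) x (fun i => ⟨fun _ => hx i, fun h => absurd i.isLt (by omega)⟩)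

end SEP
namespace SEP

open IsLocalRing

variable {Λ : Type} [CommRing Λ] [IsLocalRing Λ] [IsNoetherianRing Λ]
  [IsAdicComplete (IsLocalRing.maximalIdeal Λ) Λ]

/-! ### Quotients of objects of `C_Λ` -/

lemma isUnit_mk_iff {R : ArtAlg Λ} {I : Ideal R.carrier}
    (hI : I ≤ maximalIdeal R.carrier) (x : R.carrier) :
    IsUnit (Ideal.Quotient.mk I x) ↔ IsUnit x := by
  constructor
  · rintro hu
    obtain ⟨b, hb⟩ := isUnit_iff_exists_inv.1 hu
    obtain ⟨c, rfl⟩ := Ideal.Quotient.mk_surjective b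
    have hmem : x * c - 1 ∈ I := by
      rw [← Ideal.Quotient.eq_zero_iff_mem, map_sub, map_mul, hb]; simp
    have hxc : IsUnit (x * c) := by
      by_contra h
      have h1 : x * c ∈ maximalIdeal R.carrier := (mem_maximalIdeal _).2 h
      have hone : (1 : R.carrier) ∈ maximalIdeal R.carrier := by
        have := sub_mem h1 (hI hmem)
        simpa using this
      exact (IsLocalRing.maximalIdeal.isMaximal R.carrier).ne_top
        ((Ideal.eq_top_iff_one _).2 hone)
    exact isUnit_of_mul_isUnit_left hxc
  · exact fun h => h.map _

lemma art_hom_mem_max {R S : ArtAlg Λ} (φ : R ⟶ S) {x : R.carrier}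
    (hx : x ∈ maximalIdeal R.carrier) :
    ArtAlg.toAlg φ x ∈ maximalIdeal S.carrier := by
  obtain ⟨k, hk⟩ := IsArtinianRing.isNilpotent_jacobson_bot (R := R.carrier)
  rw [IsLocalRing.jacobson_eq_maximalIdeal ⊥ bot_ne_top] at hk
  have hxk : x ^ k = 0 := by
    have := Ideal.pow_mem_pow hx k
    rw [hk] at this
    simpa using this
  by_contra h
  have hu : IsUnit (ArtAlg.toAlg φ x) := by
    by_contra h'
    exact h ((mem_maximalIdeal _).2 h')
  have h0 : IsUnit ((0 : S.carrier)) := by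
    have := hu.pow k
    rwa [← map_pow, hxk, map_zero] at this
  rw [isUnit_zero_iff] at h0
  exact zero_ne_one h0

lemma art_hom_map_max_le {R S : ArtAlg Λ} (φ : R ⟶ S) :
    Ideal.map (ArtAlg.toAlg φ) (maximalIdeal R.carrier) ≤ maximalIdeal S.carrier :=
  Ideal.map_le_iff_le_comap.2 (fun _ hx => art_hom_mem_max φ hx)

lemma ideal_map_algHom_eq {R S : Type} [CommRing R] [CommRing S] [Algebra Λ R] [Algebra Λ S]
    (f : R →ₐ[Λ] S) (I : Ideal R) :
    Ideal.map f I = Ideal.map (f : R →+* S) I := rfl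

lemma art_hom_map_cotDenom_le {R S : ArtAlg Λ} (φ : R ⟶ S) :
    Ideal.map (ArtAlg.toAlg φ) (cotDenom Λ R) ≤ cotDenom Λ S := by
  have h1 : Ideal.map (ArtAlg.toAlg φ) (maximalIdeal R.carrier) ≤ maximalIdeal S.carrier :=
    art_hom_map_max_le φ
  have h2 : ((ArtAlg.toAlg φ : R.carrier →ₐ[Λ] S.carrier) :
      R.carrier →+* S.carrier).comp (algebraMap Λ R.carrier) = algebraMap Λ S.carrier :=
    (ArtAlg.toAlg φ).comp_algebraMap
  have h3 : Ideal.map (ArtAlg.toAlg φ)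
      (Ideal.map (algebraMap Λ R.carrier) (maximalIdeal Λ))
      = Ideal.map (algebraMap Λ S.carrier) (maximalIdeal Λ) := by
    rw [ideal_map_algHom_eq, Ideal.map_map, h2]
  rw [cotDenom, Ideal.map_sup, Ideal.map_pow, Ideal.map_mul, h3]
  exact sup_le_sup (Ideal.pow_right_mono h1 2) (Ideal.mul_mono le_rfl h1)

lemma residueField_map_congr {R S : Type} [CommRing R] [CommRing S] [IsLocalRing R]
    [IsLocalRing S] {f g : R →+* S} [IsLocalHom f] [IsLocalHom g] (h : f = g)
    (x : IsLocalRing.ResidueField R) :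
    IsLocalRing.ResidueField.map f x = IsLocalRing.ResidueField.map g x := by
  subst h; rfl

lemma cotDenom_le_max (R : ArtAlg Λ) : cotDenom Λ R ≤ maximalIdeal R.carrier :=
  sup_le (Ideal.pow_le_self (by norm_num)) Ideal.mul_le_right

/-- The quotient of an object of `C_Λ` by an ideal contained in the maximal ideal. -/
def quotArt (R : ArtAlg Λ) (I : Ideal R.carrier) (hI : I ≤ maximalIdeal R.carrier) :
    ArtAlg Λ :=
  letI hne : I ≠ ⊤ := fun h => (IsLocalRing.maximalIdeal.isMaximal R.carrier).ne_top
    (top_le_iff.1 (h ▸ hI))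
  letI : Nontrivial (R.carrier ⧸ I) := Ideal.Quotient.nontrivial_iff.mpr hne
  { carrier := R.carrier ⧸ I
    commRing := inferInstance
    algebra := Ideal.Quotient.algebra Λ
    artinian := Ideal.Quotient.mk_surjective.isArtinianRing
    isLocal := IsLocalRing.of_surjective' (Ideal.Quotient.mk I) Ideal.Quotient.mk_surjective
    localHom := by
      constructor
      intro a ha
      have hcomm : algebraMap Λ (R.carrier ⧸ I) a
          = Ideal.Quotient.mk I (algebraMap Λ R.carrier a) :=
        ((Ideal.Quotient.mkₐ Λ I).commutes a).symm
      rw [hcomm] at ha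
      exact IsLocalHom.map_nonunit a ((isUnit_mk_iff hI _).1 ha)
    residue_bij := by
      haveI : IsLocalRing (R.carrier ⧸ I) :=
        IsLocalRing.of_surjective' (Ideal.Quotient.mk I) Ideal.Quotient.mk_surjective
      haveI hl1 : IsLocalHom (Ideal.Quotient.mk I) := ⟨fun a ha => (isUnit_mk_iff hI a).1 ha⟩
      haveI hl2 : IsLocalHom (algebraMap Λ (R.carrier ⧸ I)) := by
        constructor
        intro a ha
        have hcomm : algebraMap Λ (R.carrier ⧸ I) a
            = Ideal.Quotient.mk I (algebraMap Λ R.carrier a) :=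
          ((Ideal.Quotient.mkₐ Λ I).commutes a).symm
        rw [hcomm] at ha
        exact IsLocalHom.map_nonunit a ((isUnit_mk_iff hI _).1 ha)
      constructor
      · exact (IsLocalRing.ResidueField.map (algebraMap Λ (R.carrier ⧸ I))).injective
      · intro ξ
        obtain ⟨ybar, rfl⟩ := IsLocalRing.residue_surjective (R := R.carrier ⧸ I) ξ
        obtain ⟨y, rfl⟩ := Ideal.Quotient.mk_surjective ybar
        obtain ⟨a, ha⟩ := R.residue_bij.2 (IsLocalRing.residue R.carrier y)
        refine ⟨a, ?_⟩
        have hcomp : (algebraMap Λ (R.carrier ⧸ I))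
            = (Ideal.Quotient.mk I).comp (algebraMap Λ R.carrier) :=
          RingHom.ext fun t => ((Ideal.Quotient.mkₐ Λ I).commutes t).symm
        haveI : IsLocalHom ((Ideal.Quotient.mk I).comp (algebraMap Λ R.carrier)) := by
          rw [← hcomp]; exact hl2
        have hmc := IsLocalRing.ResidueField.map_comp (algebraMap Λ R.carrier)
          (Ideal.Quotient.mk I)
        calc IsLocalRing.ResidueField.map (algebraMap Λ (R.carrier ⧸ I)) a
            = IsLocalRing.ResidueField.map
                ((Ideal.Quotient.mk I).comp (algebraMap Λ R.carrier)) a :=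
              residueField_map_congr hcomp a
          _ = IsLocalRing.ResidueField.map (Ideal.Quotient.mk I)
                (IsLocalRing.ResidueField.map (algebraMap Λ R.carrier) a) := by
              rw [hmc]; rfl
          _ = IsLocalRing.ResidueField.map (Ideal.Quotient.mk I)
                (IsLocalRing.residue R.carrier y) := by rw [ha]
          _ = IsLocalRing.residue _ (Ideal.Quotient.mk I y) :=
              IsLocalRing.ResidueField.map_residue _ y }

end SEP
namespace SEP

open IsLocalRing

variable {Λ : Type} [CommRing Λ] [IsLocalRing Λ] [IsNoetherianRing Λ]
  [IsAdicComplete (IsLocalRing.maximalIdeal Λ) Λ]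

variable {A : SArtAlg Λ}

/-! ### Quotients of objects of `sC_Λ` by simplicial ideals -/

/-- The underlying simplicial object of the quotient of `A` by a simplicial ideal. -/
def SIdeal.qX (J : SIdeal A) : SimplicialObject (ArtAlg Λ) where
  obj m := quotArt (A.X.obj m) (J.I m) (J.le_max' m)
  map {m m'} g :=
    (Ideal.quotientMapₐ (J.I m') (ArtAlg.toAlg (A.X.map g))
      (fun x hx => Ideal.mem_comap.2 (J.map_mem' g hx)) :
      (lvl A m ⧸ J.I m) →ₐ[Λ] (lvl A m' ⧸ J.I m'))
  map_id m := by
    apply AlgHom.ext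
    intro xb
    obtain ⟨x, rfl⟩ := Ideal.Quotient.mk_surjective xb
    show Ideal.Quotient.mk (J.I m) (ArtAlg.toAlg (A.X.map (𝟙 m)) x) = _
    rw [toAlg_congr (A.X.map_id m) x, toAlg_id]
    rfl
  map_comp {m m' m''} g g' := by
    apply AlgHom.ext
    intro xb
    obtain ⟨x, rfl⟩ := Ideal.Quotient.mk_surjective xb
    show Ideal.Quotient.mk (J.I m'') (ArtAlg.toAlg (A.X.map (g ≫ g')) x) = _
    rw [toAlg_congr (A.X.map_comp g g') x, toAlg_comp]
    rfl

lemma qX_map_mk (J : SIdeal A) {m m' : SimplexCategoryᵒᵖ} (g : m ⟶ m') (x : lvl A m) :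
    ArtAlg.toAlg (J.qX.map g) (Ideal.Quotient.mk (J.I m) x)
      = Ideal.Quotient.mk (J.I m') (ArtAlg.toAlg (A.X.map g) x) := rfl

instance quotLvl_local (J : SIdeal A) (m : SimplexCategoryᵒᵖ) :
    IsLocalRing (lvl A m ⧸ J.I m) := (J.qX.obj m).isLocal

/-- The simplicial ideal `cotDenom ⊔ J`. -/
def SIdeal.cotSup (J : SIdeal A) : SIdeal A where
  I m := cotDenom Λ (A.X.obj m) ⊔ J.I m
  map_mem' {m m'} g {x} hx := by
    obtain ⟨c, hc, j, hj, rfl⟩ := Submodule.mem_sup.1 hx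
    rw [map_add]
    exact Submodule.add_mem_sup
      (art_hom_map_cotDenom_le (A.X.map g) (Ideal.mem_map_of_mem _ hc)) (J.map_mem' g hj)
  le_max' m := sup_le (cotDenom_le_max _) (J.le_max' m)

lemma qX_max (J : SIdeal A) (m : SimplexCategoryᵒᵖ) :
    maximalIdeal ((J.qX.obj m).carrier)
      = Ideal.map (Ideal.Quotient.mk (J.I m)) (maximalIdeal (lvl A m)) := by
  have hI := J.le_max' m
  apply le_antisymm
  · intro xb hxb
    obtain ⟨x, rfl⟩ := Ideal.Quotient.mk_surjective xb
    have h1 : ¬IsUnit ((Ideal.Quotient.mk (J.I m)) x) := (mem_maximalIdeal _).1 hxb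
    have h2 : x ∈ maximalIdeal (lvl A m) :=
      (mem_maximalIdeal _).2 (fun hu => h1 ((isUnit_mk_iff hI x).2 hu))
    exact Ideal.mem_map_of_mem _ h2
  · erw [Ideal.map_le_iff_le_comap]
    intro x hx
    exact Ideal.mem_comap.2 ((mem_maximalIdeal (R := (J.qX.obj m).carrier) _).2
      (fun hu => (mem_maximalIdeal x).1 hx ((isUnit_mk_iff hI x).1 hu)))

lemma qX_cotDenom (J : SIdeal A) (m : SimplexCategoryᵒᵖ) :
    cotDenom Λ (J.qX.obj m)
      = Ideal.map (Ideal.Quotient.mk (J.I m)) (cotDenom Λ (A.X.obj m)) := by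
  have hcomp : (Ideal.Quotient.mk (J.I m)).comp (algebraMap Λ (lvl A m))
      = algebraMap Λ ((J.qX.obj m).carrier) :=
    RingHom.ext fun t => (Ideal.Quotient.mkₐ Λ (J.I m)).commutes t
  rw [cotDenom, cotDenom, Ideal.map_sup, Ideal.map_pow, Ideal.map_mul, qX_max,
    Ideal.map_map, hcomp]
  rfl

/-- The quotient of `A` by a simplicial ideal, as an object of `sC_Λ`. -/
def SIdeal.quot (J : SIdeal A) : SArtAlg Λ where
  X := J.qX
  nilpotent := by
    obtain ⟨n, hn, hA⟩ := A.nilpotent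
    refine ⟨n, hn, fun m => ?_⟩
    rw [qX_max]
    show (Ideal.map (Ideal.Quotient.mk (J.I m)) (maximalIdeal (lvl A m))) ^ n
      = (⊥ : Ideal (lvl A m ⧸ J.I m))
    rw [← Ideal.map_pow, hA m, Ideal.map_bot]
  cotFinite := by
    obtain ⟨N, hN⟩ := A.cotFinite
    refine ⟨N, fun n hn => ?_⟩
    cases n with
    | zero =>
      intro xb hxb
      rw [qX_max J (op ⦋0⦌)] at hxb
      obtain ⟨x, hx, rfl⟩ := Ideal.mem_map_iff_of_surjective _
        Ideal.Quotient.mk_surjective |>.1 hxb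
      have hx' : x ∈ cotDenom Λ (A.X.obj (op ⦋0⦌)) := hN 0 hn x hx
      rw [qX_cotDenom J (op ⦋0⦌)]
      exact Ideal.mem_map_of_mem _ hx'
    | succ q =>
      intro xb hxb hfaces
      rw [qX_max J (op ⦋q+1⦌)] at hxb
      obtain ⟨x, hx, rfl⟩ := Ideal.mem_map_iff_of_surjective _
        Ideal.Quotient.mk_surjective |>.1 hxb
      -- the faces of x lie in cotDenom ⊔ J
      have hfaces' : ∀ i : Fin (q + 1),
          ArtAlg.toAlg (A.X.δ i.succ) x ∈ (J.cotSup).I (op ⦋q⦌) := by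
        intro i
        have h1 := hfaces i
        have h2 : ArtAlg.toAlg (J.qX.δ i.succ) (Ideal.Quotient.mk (J.I (op ⦋q+1⦌)) x)
            = Ideal.Quotient.mk (J.I (op ⦋q⦌)) (ArtAlg.toAlg (A.X.δ i.succ) x) := rfl
        rw [h2] at h1
        rw [qX_cotDenom J (op ⦋q⦌)] at h1
        have h3 := Ideal.comap_map_of_surjective (Ideal.Quotient.mk (J.I (op ⦋q⦌)))
          Ideal.Quotient.mk_surjective (cotDenom Λ (A.X.obj (op ⦋q⦌)))
        have h4 : ArtAlg.toAlg (A.X.δ i.succ) x ∈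
            Ideal.comap (Ideal.Quotient.mk (J.I (op ⦋q⦌)))
              (Ideal.map (Ideal.Quotient.mk (J.I (op ⦋q⦌))) (cotDenom Λ (A.X.obj (op ⦋q⦌)))) :=
          Ideal.mem_comap.2 h1
        rw [h3] at h4
        have h5 : Ideal.comap (Ideal.Quotient.mk (J.I (op ⦋q⦌))) ⊥ = J.I (op ⦋q⦌) := by
          rw [← RingHom.ker_eq_comap_bot, Ideal.mk_ker]
        rw [h5] at h4
        exact h4
      obtain ⟨y, hy1, hy2⟩ := coreA J.cotSup x hfaces'
      have hymax : y ∈ maximalIdeal (lvl A (op ⦋q+1⦌)) := by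
        have : x - y ∈ maximalIdeal (lvl A (op ⦋q+1⦌)) := (J.cotSup.le_max' _) hy1
        have := sub_mem hx this
        simpa using this
      have hycot : y ∈ cotDenom Λ (A.X.obj (op ⦋q+1⦌)) := by
        refine hN (q+1) hn y hymax (fun i => ?_)
        rw [hy2 i]
        exact zero_mem _
      have hxmem : x ∈ cotDenom Λ (A.X.obj (op ⦋q+1⦌)) ⊔ J.I (op ⦋q+1⦌) := by
        have : x = y + (x - y) := by ring
        rw [this]
        exact add_mem (Ideal.mem_sup_left hycot) hy1
      rw [qX_cotDenom J (op ⦋q+1⦌)]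
      have := Ideal.mem_map_of_mem (Ideal.Quotient.mk (J.I (op ⦋q+1⦌))) hxmem
      rw [Ideal.map_sup, Ideal.map_quotient_self, sup_bot_eq] at this
      exact this

/-- The quotient morphism `A ⟶ A/J` in `sC_Λ`. -/
def SIdeal.qmk (J : SIdeal A) : A ⟶ J.quot where
  app m := (Ideal.Quotient.mkₐ Λ (J.I m) : (lvl A m) →ₐ[Λ] (lvl A m ⧸ J.I m))
  naturality {m m'} g := by
    apply AlgHom.ext
    intro x
    rfl

lemma qmk_app (J : SIdeal A) (m : SimplexCategoryᵒᵖ) (x : lvl A m) :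
    SArtAlg.app (J.qmk) m x = Ideal.Quotient.mk (J.I m) x := rfl

/-- Factoring a morphism through the quotient. -/
def SIdeal.qlift (J : SIdeal A) {B : SArtAlg Λ} (φ : A ⟶ B)
    (h : ∀ m, ∀ x ∈ J.I m, SArtAlg.app φ m x = 0) : J.quot ⟶ B where
  app m := Ideal.Quotient.liftₐ (J.I m) (SArtAlg.app φ m) (h m)
  naturality {m m'} g := by
    apply AlgHom.ext
    intro xb
    obtain ⟨x, rfl⟩ := Ideal.Quotient.mk_surjective xb
    show Ideal.Quotient.liftₐ (J.I m') (SArtAlg.app φ m') (h m')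
        (Ideal.Quotient.mk (J.I m') (ArtAlg.toAlg (A.X.map g) x))
      = ArtAlg.toAlg (B.X.map g)
        (Ideal.Quotient.liftₐ (J.I m) (SArtAlg.app φ m) (h m) (Ideal.Quotient.mk (J.I m) x))
    show SArtAlg.app φ m' (ArtAlg.toAlg (A.X.map g) x)
      = ArtAlg.toAlg (B.X.map g) (SArtAlg.app φ m x)
    exact SArtAlg.app_naturality φ g x

lemma qlift_app (J : SIdeal A) {B : SArtAlg Λ} (φ : A ⟶ B)
    (h : ∀ m, ∀ x ∈ J.I m, SArtAlg.app φ m x = 0) (m : SimplexCategoryᵒᵖ) (x : lvl A m) :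
    SArtAlg.app (J.qlift φ h) m (Ideal.Quotient.mk (J.I m) x) = SArtAlg.app φ m x := rfl

/-- The kernel of a morphism, as a simplicial ideal. -/
def kerS {B : SArtAlg Λ} (f : A ⟶ B) : SIdeal A where
  I m := RingHom.ker (SArtAlg.app f m).toRingHom
  map_mem' {m m'} g {x} hx := by
    rw [RingHom.mem_ker] at hx ⊢
    show SArtAlg.app f m' (ArtAlg.toAlg (A.X.map g) x) = 0
    rw [SArtAlg.app_naturality f g x]
    have hx' : SArtAlg.app f m x = 0 := hx
    rw [hx', map_zero]
  le_max' m := by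
    intro x hx
    rw [RingHom.mem_ker] at hx
    refine (mem_maximalIdeal _).2 (fun hu => ?_)
    have h0 : IsUnit ((0 : lvl B m)) := by
      have h := hu.map (SArtAlg.app f m)
      rwa [show SArtAlg.app f m x = 0 from hx] at h
    rw [isUnit_zero_iff] at h0
    exact zero_ne_one h0

end SEP
namespace SEP

open IsLocalRing

variable {Λ : Type} [CommRing Λ] [IsLocalRing Λ] [IsNoetherianRing Λ]
  [IsAdicComplete (IsLocalRing.maximalIdeal Λ) Λ]

variable {A B : SArtAlg Λ}

lemma app_comp {C : SArtAlg Λ} (f : A ⟶ B) (g : B ⟶ C) (m : SimplexCategoryᵒᵖ) (x : lvl A m) :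
    SArtAlg.app (f ≫ g) m x = SArtAlg.app g m (SArtAlg.app f m x) := rfl

lemma app_congr {f g : A ⟶ B} (h : f = g) (m : SimplexCategoryᵒᵖ) (x : lvl A m) :
    SArtAlg.app f m x = SArtAlg.app g m x := by rw [h]

lemma shom_ext {f g : A ⟶ B} (h : ∀ m (x : lvl A m), SArtAlg.app f m x = SArtAlg.app g m x) :
    f = g := by
  apply NatTrans.ext
  funext m
  exact AlgHom.ext (h m)

/-- The data of a suitable filtration of the kernel of `f` by simplicial ideals. -/
structure TowerData (f : A ⟶ B) where
  K : ℕ → SIdeal A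
  hK0 : ∀ m, (K 0).I m = RingHom.ker (SArtAlg.app f m).toRingHom
  hmono : ∀ j m, (K (j+1)).I m ≤ (K j).I m
  hsmall : ∀ j m, maximalIdeal (lvl A m) * (K j).I m ≤ (K (j+1)).I m
  hvanish : ∀ m, ∃ j, (K j).I m = ⊥

namespace TowerData

variable {f : A ⟶ B} (D : TowerData f)

lemma antitone {j j' : ℕ} (h : j ≤ j') (m : SimplexCategoryᵒᵖ) :
    (D.K j').I m ≤ (D.K j).I m := by
  induction j' with
  | zero => have : j = 0 := by omega
            subst this; exact le_rfl
  | succ j' IH =>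
    rcases Nat.lt_or_ge j (j'+1) with hlt | hge
    · exact le_trans (D.hmono j' m) (IH (by omega))
    · have : j = j' + 1 := by omega
      subst this; exact le_rfl

lemma le_ker {j : ℕ} (m : SimplexCategoryᵒᵖ) {x : lvl A m} (hx : x ∈ (D.K j).I m) :
    SArtAlg.app f m x = 0 := by
  have h0 : x ∈ (D.K 0).I m := D.antitone (Nat.zero_le j) m hx
  rw [D.hK0 m] at h0
  exact h0

/-- The objects of the tower. -/
def C : ℕ → SArtAlg Λ := fun j => match j with
  | 0 => B
  | j + 1 => (D.K (j+1)).quot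

/-- The transition maps of the tower. -/
def g : ∀ j : ℕ, D.C (j+1) ⟶ D.C j := fun j => match j with
  | 0 => (D.K 1).qlift f (fun m x hx => D.le_ker m hx)
  | j + 1 => (D.K (j+2)).qlift ((D.K (j+1)).qmk)
      (fun m x hx => by
        show Ideal.Quotient.mk ((D.K (j+1)).I m) x = 0
        rw [Ideal.Quotient.eq_zero_iff_mem]
        exact D.hmono (j+1) m hx)

/-- The projections from `A` to the tower. -/
def p : ∀ j : ℕ, A ⟶ D.C j := fun j => match j with
  | 0 => f
  | j + 1 => (D.K (j+1)).qmk

lemma compat (j : ℕ) : D.p (j+1) ≫ D.g j = D.p j := by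
  apply shom_ext
  intro m x
  cases j with
  | zero => rfl
  | succ j => rfl

lemma g_app_mk (j : ℕ) (m : SimplexCategoryᵒᵖ) (x : lvl A m) :
    SArtAlg.app (D.g j) m (Ideal.Quotient.mk ((D.K (j+1)).I m) x)
      = SArtAlg.app (D.p j) m x := by
  cases j with
  | zero => rfl
  | succ j => rfl

lemma g_surj (hf : SArtAlg.Surj f) (j : ℕ) : SArtAlg.Surj (D.g j) := by
  intro m y
  cases j with
  | zero =>
    obtain ⟨x, hx⟩ := hf m y
    exact ⟨Ideal.Quotient.mk ((D.K 1).I m) x, hx⟩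
  | succ j =>
    obtain ⟨x, hx⟩ := Ideal.Quotient.mk_surjective y
    exact ⟨Ideal.Quotient.mk ((D.K (j+2)).I m) x, hx⟩

lemma ker_g (hf : SArtAlg.Surj f) (j : ℕ) (m : SimplexCategoryᵒᵖ) :
    RingHom.ker (SArtAlg.app (D.g j) m).toRingHom
      = Ideal.map (Ideal.Quotient.mk ((D.K (j+1)).I m)) ((D.K j).I m) := by
  apply le_antisymm
  · intro xb hxb
    obtain ⟨x, rfl⟩ := Ideal.Quotient.mk_surjective xb
    have hx : SArtAlg.app (D.g j) m (Ideal.Quotient.mk ((D.K (j+1)).I m) x) = 0 := hxb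
    rw [D.g_app_mk j m x] at hx
    have hxK : x ∈ (D.K j).I m := by
      cases j with
      | zero => rw [D.hK0 m]; exact hx
      | succ j =>
        have : Ideal.Quotient.mk ((D.K (j+1)).I m) x = 0 := hx
        rwa [Ideal.Quotient.eq_zero_iff_mem] at this
    exact Ideal.mem_map_of_mem _ hxK
  · erw [Ideal.map_le_iff_le_comap]
    intro x hx
    show SArtAlg.app (D.g j) m (Ideal.Quotient.mk ((D.K (j+1)).I m) x) = 0
    rw [D.g_app_mk j m x]
    cases j with
    | zero =>
      show SArtAlg.app f m x = 0
      have : x ∈ RingHom.ker (SArtAlg.app f m).toRingHom := (D.hK0 m) ▸ hx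
      exact this
    | succ j =>
      show Ideal.Quotient.mk ((D.K (j+1)).I m) x = 0
      rw [Ideal.Quotient.eq_zero_iff_mem]
      exact hx

lemma g_small (hf : SArtAlg.Surj f) (j : ℕ) : SArtAlg.SmallExt (D.g j) := by
  refine ⟨D.g_surj hf j, fun m => ?_⟩
  rw [ker_g D hf j m]
  have h1 : maximalIdeal (lvl (D.C (j+1)) m)
      = Ideal.map (Ideal.Quotient.mk ((D.K (j+1)).I m)) (maximalIdeal (lvl A m)) :=
    qX_max (D.K (j+1)) m
  rw [h1]
  erw [← Ideal.map_mul]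
  have h2 : Ideal.map (Ideal.Quotient.mk ((D.K (j+1)).I m))
      (maximalIdeal (lvl A m) * (D.K j).I m)
      ≤ Ideal.map (Ideal.Quotient.mk ((D.K (j+1)).I m)) ((D.K (j+1)).I m) :=
    Ideal.map_mono (D.hsmall j m)
  rw [Ideal.map_quotient_self] at h2
  exact le_bot_iff.1 h2

lemma g_inj_of_bot (hf : SArtAlg.Surj f) (j : ℕ) (m : SimplexCategoryᵒᵖ)
    (hj : (D.K j).I m = ⊥) : Function.Injective (SArtAlg.app (D.g j) m) := by
  have hker := D.ker_g hf j m
  rw [hj, Ideal.map_bot] at hker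
  have : Function.Injective (SArtAlg.app (D.g j) m).toRingHom :=
    (RingHom.injective_iff_ker_eq_bot _).2 hker
  exact this

/-- The tower factorisation associated to the data. -/
def tower (hf : SArtAlg.Surj f) : TowerFactorisation f where
  C := D.C
  g := D.g
  p := D.p
  e := Iso.refl B
  compat := D.compat
  factors := Category.comp_id f
  isLimit := by
    intro m
    constructor
    · intro a a' h
      obtain ⟨j₀, hj₀⟩ := D.hvanish m
      have hj1 : (D.K (j₀+1)).I m = ⊥ := le_bot_iff.1 (hj₀ ▸ D.hmono j₀ m)
      have hval := congrFun (congrArg Subtype.val h) (j₀+1)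
      have : Ideal.Quotient.mk ((D.K (j₀+1)).I m) a
          = Ideal.Quotient.mk ((D.K (j₀+1)).I m) a' := hval
      rw [Ideal.Quotient.eq, hj1] at this
      exact sub_eq_zero.1 ((Submodule.mem_bot _).1 this)
    · rintro ⟨s, hs⟩
      obtain ⟨j₀, hj₀⟩ := D.hvanish m
      have hbot : ∀ j, j₀ ≤ j → (D.K j).I m = ⊥ :=
        fun j hj => le_bot_iff.1 (hj₀ ▸ D.antitone hj m)
      obtain ⟨a, ha⟩ := Ideal.Quotient.mk_surjective (s (j₀ + 1))
      have base : SArtAlg.app (D.p (j₀ + 1)) m a = s (j₀ + 1) := ha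
      have hpc : ∀ j (x : lvl A m),
          SArtAlg.app (D.g j) m (SArtAlg.app (D.p (j+1)) m x) = SArtAlg.app (D.p j) m x :=
        fun j x => by rw [← app_comp]; exact app_congr (D.compat j) m x
      have up : ∀ d, SArtAlg.app (D.p (j₀ + 1 + d)) m a = s (j₀ + 1 + d) := by
        intro d
        induction d with
        | zero => exact base
        | succ d IH =>
          have hinj := D.g_inj_of_bot hf (j₀ + 1 + d) m (hbot _ (by omega))
          apply hinj
          have h1 := hpc (j₀ + 1 + d) a
          have h2 := hs (j₀ + 1 + d)
          calc SArtAlg.app (D.g (j₀+1+d)) m (SArtAlg.app (D.p (j₀+1+d+1)) m a)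
              = SArtAlg.app (D.p (j₀+1+d)) m a := h1
            _ = s (j₀+1+d) := IH
            _ = SArtAlg.app (D.g (j₀+1+d)) m (s (j₀+1+d+1)) := h2.symm
      have down : ∀ d, SArtAlg.app (D.p (j₀ + 1 - d)) m a = s (j₀ + 1 - d) := by
        intro d
        induction d with
        | zero => exact base
        | succ d IH =>
          by_cases h : j₀ + 1 - (d+1) = j₀ + 1 - d
          · rw [h]; exact IH
          · have h2 : (j₀ + 1 - (d+1)) + 1 = j₀ + 1 - d := by omega
            rw [← h2] at IH
            calc SArtAlg.app (D.p (j₀ + 1 - (d+1))) m a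
                = SArtAlg.app (D.g (j₀ + 1 - (d+1))) m
                    (SArtAlg.app (D.p (j₀ + 1 - (d+1) + 1)) m a) := (hpc _ a).symm
              _ = SArtAlg.app (D.g (j₀ + 1 - (d+1))) m (s (j₀ + 1 - (d+1) + 1)) := by rw [IH]
              _ = s (j₀ + 1 - (d+1)) := hs _
      have key : ∀ j, SArtAlg.app (D.p j) m a = s j := by
        intro j
        rcases le_or_gt j (j₀ + 1) with hle | hlt
        · have := down (j₀ + 1 - j)
          rwa [show j₀ + 1 - (j₀ + 1 - j) = j from by omega] at this
        · have := up (j - (j₀ + 1))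
          rwa [show j₀ + 1 + (j - (j₀ + 1)) = j from by omega] at this
      exact ⟨a, Subtype.ext (funext key)⟩

end TowerData

end SEP
namespace SEP

open IsLocalRing

variable {Λ : Type} [CommRing Λ] [IsLocalRing Λ] [IsNoetherianRing Λ]
  [IsAdicComplete (IsLocalRing.maximalIdeal Λ) Λ]

variable {A B : SArtAlg Λ}

/-- The filtration `m^j · ker f` of the kernel. -/
def powKer (f : A ⟶ B) (j : ℕ) : SIdeal A where
  I m := maximalIdeal (lvl A m) ^ j * (kerS f).I m
  map_mem' {m m'} g {x} hx := by
    have hle : Ideal.map (ArtAlg.toAlg (A.X.map g))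
        (maximalIdeal (lvl A m) ^ j * (kerS f).I m)
        ≤ maximalIdeal (lvl A m') ^ j * (kerS f).I m' := by
      rw [Ideal.map_mul, Ideal.map_pow]
      exact Ideal.mul_mono (Ideal.pow_right_mono (art_hom_map_max_le (A.X.map g)) j)
        (Ideal.map_le_iff_le_comap.2 (fun y hy => (kerS f).map_mem' g hy))
    exact hle (Ideal.mem_map_of_mem _ hx)
  le_max' m := le_trans Ideal.mul_le_right ((kerS f).le_max' m)

/-- The `m`-adic tower data for an arbitrary surjection. -/
def powData (f : A ⟶ B) : TowerData f where
  K := powKer f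
  hK0 := fun m => by
    show maximalIdeal (lvl A m) ^ 0 * (kerS f).I m = _
    rw [pow_zero, Ideal.one_eq_top, Ideal.top_mul]
    rfl
  hmono := fun j m => by
    show maximalIdeal (lvl A m) ^ (j+1) * (kerS f).I m
      ≤ maximalIdeal (lvl A m) ^ j * (kerS f).I m
    rw [pow_succ, mul_assoc]
    exact Ideal.mul_mono le_rfl Ideal.mul_le_right
  hsmall := fun j m => by
    show maximalIdeal (lvl A m) * (maximalIdeal (lvl A m) ^ j * (kerS f).I m)
      ≤ maximalIdeal (lvl A m) ^ (j+1) * (kerS f).I m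
    rw [← mul_assoc, mul_comm (maximalIdeal (lvl A m)) (maximalIdeal (lvl A m) ^ j),
      ← pow_succ]
  hvanish := fun m => by
    obtain ⟨n, hn, hnil⟩ := A.nilpotent
    refine ⟨n, ?_⟩
    show maximalIdeal (lvl A m) ^ n * (kerS f).I m = ⊥
    rw [hnil m, Ideal.bot_mul]

theorem part1 (f : A ⟶ B) (hf : SArtAlg.Surj f) :
    ∃ T : TowerFactorisation f, ∀ j, SArtAlg.SmallExt (T.g j) :=
  ⟨(powData f).tower hf, fun j => (powData f).g_small hf j⟩

end SEP
namespace SEP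

open IsLocalRing

variable {Λ : Type} [CommRing Λ] [IsLocalRing Λ] [IsNoetherianRing Λ]
  [IsAdicComplete (IsLocalRing.maximalIdeal Λ) Λ]

variable {A B : SArtAlg Λ}

/-! ### The Moore relation is an equivalence relation -/

lemma mooreRel_equivalence (A : SArtAlg Λ) (i : ℕ) : Equivalence (A.mooreRel i) where
  refl x := ⟨0, fun j => map_zero _, by rw [map_zero, sub_self]⟩
  symm := fun {x y} ⟨h, h1, h2⟩ =>
    ⟨-h, fun j => by rw [map_neg, h1 j, neg_zero], by rw [map_neg, h2, neg_sub]⟩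
  trans := fun {x y z} ⟨h, h1, h2⟩ ⟨h', h1', h2'⟩ =>
    ⟨h + h', fun j => by rw [map_add, h1 j, h1' j, add_zero],
      by rw [map_add, h2, h2']; ring⟩

lemma pi_eq_iff (A : SArtAlg Λ) (i : ℕ) (x y : {z : lvl A (op ⦋i⦌) // A.isCycle i z}) :
    (Quot.mk (A.mooreRel i) x = Quot.mk (A.mooreRel i) y) ↔ A.mooreRel i x y := by
  rw [Quot.eq]
  exact Equivalence.eqvGen_iff (mooreRel_equivalence A i)

lemma zero_isCycle (A : SArtAlg Λ) (n : ℕ) : A.isCycle n (0 : lvl A (op ⦋n⦌)) := by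
  cases n with
  | zero => trivial
  | succ n => intro j; exact map_zero _

lemma piMap_mk (f : A ⟶ B) (i : ℕ) (x : {z : lvl A (op ⦋i⦌) // A.isCycle i z}) :
    ∃ hb, SArtAlg.piMap f i (Quot.mk _ x)
      = Quot.mk _ (⟨SArtAlg.app f (op ⦋i⦌) x.1, hb⟩ : {z : lvl B (op ⦋i⦌) // B.isCycle i z}) := by
  refine ⟨?_, rfl⟩
  · cases i with
    | zero => trivial
    | succ i =>
      intro j
      have h1 := SArtAlg.app_naturality f (g := (SimplexCategory.δ j).op) x.1
      have h2 : ArtAlg.toAlg (A.X.map (SimplexCategory.δ j).op) x.1 = 0 := x.2 j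
      show ArtAlg.toAlg (B.X.map (SimplexCategory.δ j).op) (SArtAlg.app f (op ⦋i + 1⦌) x.1) = 0
      rw [← h1, h2, map_zero]

/-- naturality for face maps, pointwise -/
lemma app_d (f : A ⟶ B) {n : ℕ} (i : Fin (n + 2)) (x : lvl A (op ⦋n + 1⦌)) :
    SArtAlg.app f (op ⦋n⦌) (ArtAlg.toAlg (A.X.δ i) x)
      = ArtAlg.toAlg (B.X.δ i) (SArtAlg.app f (op ⦋n + 1⦌) x) :=
  SArtAlg.app_naturality f ((SimplexCategory.δ i).op) x

/-- Fillability of cycles inside a simplicial ideal. -/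
def FillIdeal (T : SIdeal A) : Prop :=
  ∀ (n : ℕ) (x : lvl A (op ⦋n⦌)), x ∈ T.I (op ⦋n⦌) → A.isCycle n x →
    ∃ h : lvl A (op ⦋n + 1⦌), h ∈ T.I (op ⦋n + 1⦌) ∧
      (∀ j : Fin (n + 1), ArtAlg.toAlg (A.X.δ j.succ) h = 0) ∧
      ArtAlg.toAlg (A.X.δ (0 : Fin (n + 2))) h = x

lemma cycle_of_d0 {n : ℕ} (x' : lvl A (op ⦋n + 1⦌))
    (hx' : ∀ j : Fin (n + 1), ArtAlg.toAlg (A.X.δ j.succ) x' = 0) :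
    A.isCycle n (ArtAlg.toAlg (A.X.δ (0 : Fin (n + 2))) x') := by
  cases n with
  | zero => trivial
  | succ u =>
    intro j
    show ArtAlg.toAlg (A.X.δ j) (ArtAlg.toAlg (A.X.δ (0 : Fin (u + 3))) x') = 0
    rw [d_d0 A j x', hx' j, map_zero]

/-- Lifting normalised elements along a levelwise surjection. -/
lemma lift_normalized (f : A ⟶ B) (hf : SArtAlg.Surj f) {n : ℕ} (b : lvl B (op ⦋n + 1⦌))
    (hb : ∀ i : Fin (n + 1), ArtAlg.toAlg (B.X.δ i.succ) b = 0) :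
    ∃ a : lvl A (op ⦋n + 1⦌), SArtAlg.app f (op ⦋n + 1⦌) a = b ∧
      ∀ i : Fin (n + 1), ArtAlg.toAlg (A.X.δ i.succ) a = 0 := by
  obtain ⟨a₀, ha₀⟩ := hf (op ⦋n + 1⦌) b
  have hfaces : ∀ i : Fin (n + 1),
      ArtAlg.toAlg (A.X.δ i.succ) a₀ ∈ (kerS f).I (op ⦋n⦌) := by
    intro i
    show SArtAlg.app f (op ⦋n⦌) (ArtAlg.toAlg (A.X.δ i.succ) a₀) = 0
    rw [app_d f i.succ a₀, ha₀, hb i]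
  obtain ⟨y, hy1, hy2⟩ := coreA (kerS f) a₀ hfaces
  refine ⟨y, ?_, hy2⟩
  have h0 : SArtAlg.app f (op ⦋n + 1⦌) (a₀ - y) = 0 := hy1
  have : SArtAlg.app f (op ⦋n + 1⦌) y
      = SArtAlg.app f (op ⦋n + 1⦌) a₀ - SArtAlg.app f (op ⦋n + 1⦌) (a₀ - y) := by
    rw [map_sub]; ring
  rw [this, h0, ha₀, sub_zero]

/-- (L1): a levelwise surjection with cycle-fillable kernel is acyclic. -/
theorem acyclic_of_fill (f : A ⟶ B) (hf : SArtAlg.Surj f) (hfill : FillIdeal (kerS f)) :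
    SArtAlg.Acyclic f := by
  intro i
  constructor
  · -- injectivity
    intro q₁ q₂ hq
    induction q₁ using Quot.ind with | _ x => ?_
    induction q₂ using Quot.ind with | _ y => ?_
    obtain ⟨hbx, hx⟩ := piMap_mk f i x
    obtain ⟨hby, hy⟩ := piMap_mk f i y
    rw [hx, hy] at hq
    erw [pi_eq_iff] at hq
    obtain ⟨hB, hB1, hB2⟩ := hq
    obtain ⟨hA, hA0, hA1⟩ := lift_normalized f hf hB hB1
    set w : lvl A (op ⦋i⦌) := x.1 - y.1 - ArtAlg.toAlg (A.X.δ (0 : Fin (i + 2))) hA with hw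
    have hwker : w ∈ (kerS f).I (op ⦋i⦌) := by
      show SArtAlg.app f (op ⦋i⦌) w = 0
      rw [hw, map_sub, map_sub, app_d f (0 : Fin (i + 2)) hA, hA0, hB2]
      ring
    have hwcyc : A.isCycle i w := by
      cases i with
      | zero => trivial
      | succ s =>
        intro j
        rw [hw, map_sub, map_sub, x.2 j, y.2 j, d_d0 A j hA, hA1 j, map_zero]
        ring
    obtain ⟨z, hz0, hz1, hz2⟩ := hfill i w hwker hwcyc
    apply Quot.sound
    refine ⟨hA + z, fun j => by rw [map_add, hA1 j, hz1 j, add_zero], ?_⟩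
    rw [map_add, hz2, hw]
    ring
  · -- surjectivity
    intro q
    induction q using Quot.ind with | _ b => ?_
    cases i with
    | zero =>
      obtain ⟨a, ha⟩ := hf (op ⦋0⦌) b.1
      refine ⟨Quot.mk _ ⟨a, trivial⟩, ?_⟩
      obtain ⟨hb', heq⟩ := piMap_mk f 0 ⟨a, trivial⟩
      rw [heq]
      exact congrArg _ (Subtype.ext ha)
    | succ s =>
      have hbfaces : ∀ j : Fin (s + 1), ArtAlg.toAlg (B.X.δ j.succ) b.1 = 0 :=
        fun j => b.2 j.succ
      obtain ⟨x', hx'0, hx'1⟩ := lift_normalized f hf b.1 hbfaces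
      set κ : lvl A (op ⦋s⦌) := ArtAlg.toAlg (A.X.δ (0 : Fin (s + 2))) x' with hκ
      have hκker : κ ∈ (kerS f).I (op ⦋s⦌) := by
        show SArtAlg.app f (op ⦋s⦌) κ = 0
        rw [hκ, app_d f (0 : Fin (s + 2)) x', hx'0]
        exact b.2 0
      have hκcyc : A.isCycle s κ := cycle_of_d0 x' hx'1
      obtain ⟨z, hz0, hz1, hz2⟩ := hfill s κ hκker hκcyc
      have hacyc : A.isCycle (s + 1) (x' - z) := by
        intro j
        refine Fin.cases ?_ (fun k => ?_) j
        · rw [map_sub, hz2, ← hκ, sub_self]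
        · rw [map_sub, hx'1 k, hz1 k, sub_zero]
      refine ⟨Quot.mk _ ⟨x' - z, hacyc⟩, ?_⟩
      obtain ⟨hb', heq⟩ := piMap_mk f (s + 1) ⟨x' - z, hacyc⟩
      rw [heq]
      refine congrArg _ (Subtype.ext ?_)
      show SArtAlg.app f (op ⦋s + 1⦌) (x' - z) = b.1
      have hzker : SArtAlg.app f (op ⦋s + 1⦌) z = 0 := hz0
      rw [map_sub, hx'0, hzker, sub_zero]

/-- (L2): the kernel of an acyclic levelwise surjection is cycle-fillable. -/
theorem fill_of_acyclic (f : A ⟶ B) (hf : SArtAlg.Surj f) (ha : SArtAlg.Acyclic f) :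
    FillIdeal (kerS f) := by
  intro n x hx hcyc
  have hxker : SArtAlg.app f (op ⦋n⦌) x = 0 := hx
  -- [x] = [0] in π_n A
  have him : SArtAlg.piMap f n (Quot.mk _ ⟨x, hcyc⟩)
      = SArtAlg.piMap f n (Quot.mk _ ⟨0, zero_isCycle A n⟩) := by
    obtain ⟨h1, e1⟩ := piMap_mk f n ⟨x, hcyc⟩
    obtain ⟨h2, e2⟩ := piMap_mk f n ⟨0, zero_isCycle A n⟩
    rw [e1, e2]
    refine congrArg _ (Subtype.ext ?_)
    show SArtAlg.app f (op ⦋n⦌) x = SArtAlg.app f (op ⦋n⦌) 0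
    rw [hxker, map_zero]
  have hrel : A.mooreRel n ⟨x, hcyc⟩ ⟨0, zero_isCycle A n⟩ :=
    (pi_eq_iff A n _ _).1 ((ha n).1 him)
  obtain ⟨h₁, h₁1, h₁2⟩ := hrel
  have h₁2' : ArtAlg.toAlg (A.X.δ (0 : Fin (n + 2))) h₁ = x := by
    rw [h₁2]; exact sub_zero x
  -- the image of h₁ is a cycle in B
  set b : lvl B (op ⦋n + 1⦌) := SArtAlg.app f (op ⦋n + 1⦌) h₁ with hb
  have hbcyc : B.isCycle (n + 1) b := by
    intro j
    refine Fin.cases ?_ (fun k => ?_) j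
    · show ArtAlg.toAlg (B.X.δ (0 : Fin (n + 2))) b = 0
      rw [hb, ← app_d f (0 : Fin (n + 2)) h₁, h₁2', hxker]
    · show ArtAlg.toAlg (B.X.δ k.succ) b = 0
      rw [hb, ← app_d f k.succ h₁, h₁1 k, map_zero]
  -- surjectivity of π_{n+1}
  obtain ⟨q, hq⟩ := (ha (n + 1)).2 (Quot.mk _ ⟨b, hbcyc⟩)
  obtain ⟨ap, rfl⟩ := Quot.exists_rep q
  obtain ⟨hbp, heq⟩ := piMap_mk f (n + 1) ap
  rw [heq] at hq
  erw [pi_eq_iff] at hq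
  obtain ⟨c, hc1, hc2⟩ := hq
  obtain ⟨c', hc'0, hc'1⟩ := lift_normalized f hf c hc1
  -- h := h₁ - ap.1 + δ₀ c'
  set h : lvl A (op ⦋n + 1⦌) := h₁ - ap.1 + ArtAlg.toAlg (A.X.δ (0 : Fin (n + 3))) c' with hh
  refine ⟨h, ?_, ?_, ?_⟩
  · show SArtAlg.app f (op ⦋n + 1⦌) h = 0
    rw [hh, map_add, map_sub, app_d f (0 : Fin (n + 3)) c', hc'0, hc2, ← hb]
    ring
  · intro j
    rw [hh, map_add, map_sub, h₁1 j, ap.2 j.succ]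
    have : ArtAlg.toAlg (A.X.δ j.succ) (ArtAlg.toAlg (A.X.δ (0 : Fin (n + 3))) c')
        = ArtAlg.toAlg (A.X.δ (0 : Fin (n + 2))) (ArtAlg.toAlg (A.X.δ j.succ.succ) c') :=
      d_d0 A j.succ c'
    rw [this, hc'1 j.succ, map_zero]
    ring
  · rw [hh, map_add, map_sub, h₁2', ap.2 0]
    have : ArtAlg.toAlg (A.X.δ (0 : Fin (n + 2))) (ArtAlg.toAlg (A.X.δ (0 : Fin (n + 3))) c')
        = ArtAlg.toAlg (A.X.δ (0 : Fin (n + 2)))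
            (ArtAlg.toAlg (A.X.δ ((0 : Fin (n + 2)).succ)) c') :=
      d_d0 A (0 : Fin (n + 2)) c'
    rw [this, hc'1 0, map_zero]
    ring

end SEP
namespace SEP

open IsLocalRing

variable {Λ : Type} [CommRing Λ] [IsLocalRing Λ] [IsNoetherianRing Λ]
  [IsAdicComplete (IsLocalRing.maximalIdeal Λ) Λ]

variable {A B : SArtAlg Λ}

lemma fillIdeal_congr {T T' : SIdeal A} (h : ∀ m, T.I m = T'.I m) (hT : FillIdeal T) :
    FillIdeal T' := by
  intro n x hx hcyc
  obtain ⟨hfill, h1, h2, h3⟩ := hT n x (by rw [h (op ⦋n⦌)]; exact hx) hcyc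
  exact ⟨hfill, by rw [← h (op ⦋n + 1⦌)]; exact h1, h2, h3⟩

namespace TowerData

variable {f : A ⟶ B} (D : TowerData f)

lemma p_kills (j : ℕ) (m : SimplexCategoryᵒᵖ) {x : lvl A m} (hx : x ∈ (D.K j).I m) :
    SArtAlg.app (D.p j) m x = 0 := by
  cases j with
  | zero =>
    have : x ∈ RingHom.ker (SArtAlg.app f m).toRingHom := (D.hK0 m) ▸ hx
    exact this
  | succ j =>
    show Ideal.Quotient.mk ((D.K (j+1)).I m) x = 0
    rw [Ideal.Quotient.eq_zero_iff_mem]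
    exact hx

lemma C_d_mk (j : ℕ) {n : ℕ} (i : Fin (n + 2)) (x : lvl A (op ⦋n + 1⦌)) :
    ArtAlg.toAlg ((D.C (j+1)).X.δ i) (Ideal.Quotient.mk ((D.K (j+1)).I (op ⦋n + 1⦌)) x)
      = Ideal.Quotient.mk ((D.K (j+1)).I (op ⦋n⦌)) (ArtAlg.toAlg (A.X.δ i) x) := rfl

lemma fill_ker_g (hf : SArtAlg.Surj f) (hfD : ∀ j, FillIdeal (D.K j)) (j : ℕ) :
    FillIdeal (kerS (D.g j)) := by
  intro n xb hxb hcyc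
  have hxb' : xb ∈ Ideal.map (Ideal.Quotient.mk ((D.K (j+1)).I (op ⦋n⦌))) ((D.K j).I (op ⦋n⦌)) :=
    (D.ker_g hf j (op ⦋n⦌)) ▸ hxb
  obtain ⟨x, hxK, rfl⟩ := (Ideal.mem_map_iff_of_surjective _ Ideal.Quotient.mk_surjective).1 hxb'
  cases n with
  | zero =>
    obtain ⟨h, hh0, hh1, hh2⟩ := hfD j 0 x hxK trivial
    refine ⟨Ideal.Quotient.mk ((D.K (j+1)).I (op ⦋1⦌)) h, ?_, ?_, ?_⟩
    · show SArtAlg.app (D.g j) (op ⦋0+1⦌) (Ideal.Quotient.mk _ h) = 0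
      rw [D.g_app_mk j (op ⦋0+1⦌) h]
      exact D.p_kills j (op ⦋0+1⦌) hh0
    · intro i
      rw [D.C_d_mk j i.succ h, hh1 i, map_zero]
      rfl
    · rw [D.C_d_mk j (0 : Fin 2) h, hh2]
  | succ q =>
    -- all faces of x lie in K (j+1)
    have hfaces : ∀ i : Fin (q + 2),
        ArtAlg.toAlg (A.X.δ i) x ∈ (D.K (j+1)).I (op ⦋q⦌) := by
      intro i
      have hc := hcyc i
      rw [D.C_d_mk j i x] at hc
      exact Ideal.Quotient.eq_zero_iff_mem.1 hc
    obtain ⟨y, hy1, hy2⟩ := coreA (D.K (j+1)) x (fun i => hfaces i.succ)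
    have hyK : y ∈ (D.K j).I (op ⦋q + 1⦌) := by
      have h1 : x - y ∈ (D.K j).I (op ⦋q + 1⦌) := D.hmono j _ hy1
      have := sub_mem hxK h1
      simpa using this
    have hmkxy : Ideal.Quotient.mk ((D.K (j+1)).I (op ⦋q+1⦌)) y
        = Ideal.Quotient.mk ((D.K (j+1)).I (op ⦋q+1⦌)) x := by
      rw [Ideal.Quotient.eq]
      have := neg_mem hy1
      rwa [neg_sub] at this
    -- η := δ₀ y
    have hηmem : ArtAlg.toAlg (A.X.δ (0 : Fin (q+2))) y ∈ (D.K (j+1)).I (op ⦋q⦌) := by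
      rw [← Ideal.Quotient.eq_zero_iff_mem (I := (D.K (j+1)).I (op ⦋q⦌))]
      rw [← D.C_d_mk j (0 : Fin (q+2)) y, hmkxy]
      exact hcyc 0
    have hηcyc : A.isCycle q (ArtAlg.toAlg (A.X.δ (0 : Fin (q+2))) y) := cycle_of_d0 y hy2
    obtain ⟨w, hw0, hw1, hw2⟩ := hfD (j+1) q _ hηmem hηcyc
    have hx''K : y - w ∈ (D.K j).I (op ⦋q + 1⦌) := sub_mem hyK (D.hmono j _ hw0)
    have hx''cyc : A.isCycle (q + 1) (y - w) := by
      intro i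
      refine Fin.cases ?_ (fun k => ?_) i
      · rw [map_sub, hw2, sub_self]
      · rw [map_sub, hy2 k, hw1 k, sub_zero]
    obtain ⟨h, hh0, hh1, hh2⟩ := hfD j (q+1) (y - w) hx''K hx''cyc
    refine ⟨Ideal.Quotient.mk ((D.K (j+1)).I (op ⦋q+2⦌)) h, ?_, ?_, ?_⟩
    · show SArtAlg.app (D.g j) (op ⦋q+1+1⦌) (Ideal.Quotient.mk _ h) = 0
      rw [D.g_app_mk j (op ⦋q+1+1⦌) h]
      exact D.p_kills j (op ⦋q+1+1⦌) hh0
    · intro i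
      rw [D.C_d_mk j i.succ h, hh1 i, map_zero]
      rfl
    · rw [D.C_d_mk j (0 : Fin (q+3)) h, hh2, map_sub,
        (Ideal.Quotient.eq_zero_iff_mem).2 hw0, sub_zero, hmkxy]

lemma g_acyclic (hf : SArtAlg.Surj f) (hfD : ∀ j, FillIdeal (D.K j)) (j : ℕ) :
    SArtAlg.Acyclic (D.g j) :=
  acyclic_of_fill _ (D.g_surj hf j) (D.fill_ker_g hf hfD j)

lemma g_acysmall (hf : SArtAlg.Surj f) (hfD : ∀ j, FillIdeal (D.K j)) (j : ℕ) :
    SArtAlg.AcySmallExt (D.g j) :=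
  ⟨D.g_small hf j, D.g_acyclic hf hfD j⟩

end TowerData
end SEP
namespace SEP

open IsLocalRing

variable {Λ : Type} [CommRing Λ] [IsLocalRing Λ] [IsNoetherianRing Λ]
  [IsAdicComplete (IsLocalRing.maximalIdeal Λ) Λ]

variable {A B : SArtAlg Λ}

lemma X_map_comp (A : SArtAlg Λ) {m m' m'' : SimplexCategoryᵒᵖ} (g : m ⟶ m') (g' : m' ⟶ m'')
    (x : lvl A m) :
    ArtAlg.toAlg (A.X.map (g ≫ g')) x = ArtAlg.toAlg (A.X.map g') (ArtAlg.toAlg (A.X.map g) x) := by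
  rw [toAlg_congr (A.X.map_comp g g') x, toAlg_comp]

lemma X_map_id (A : SArtAlg Λ) {m : SimplexCategoryᵒᵖ} (x : lvl A m) :
    ArtAlg.toAlg (A.X.map (𝟙 m)) x = x := by
  rw [toAlg_congr (A.X.map_id m) x, toAlg_id]

/-- `m_r · T_r`, the target ideal of the step construction. -/
def mT (T : SIdeal A) (r : ℕ) : Ideal (lvl A (op ⦋r⦌)) :=
  maximalIdeal (lvl A (op ⦋r⦌)) * T.I (op ⦋r⦌)

/-- The step construction: the co-disk refinement of `T` determined by the
quotient `T_r/m_rT_r` at the bottom degree `r`. -/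
def stepS (T : SIdeal A) (r : ℕ) : SIdeal A where
  I m :=
    { carrier := {x | x ∈ T.I m ∧
        (∀ γ : (⦋r⦌ : SimplexCategory) ⟶ m.unop,
          ArtAlg.toAlg (A.X.map γ.op) x ∈ mT T r) ∧
        (∀ γ' : (⦋r+1⦌ : SimplexCategory) ⟶ m.unop,
          ArtAlg.toAlg (A.X.δ (0 : Fin (r+2))) (ArtAlg.toAlg (A.X.map γ'.op) x) ∈ mT T r)}
      add_mem' := by
        rintro a b ⟨ha1, ha2, ha3⟩ ⟨hb1, hb2, hb3⟩
        refine ⟨add_mem ha1 hb1, fun γ => ?_, fun γ' => ?_⟩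
        · rw [map_add]; exact add_mem (ha2 γ) (hb2 γ)
        · rw [map_add, map_add]; exact add_mem (ha3 γ') (hb3 γ')
      zero_mem' := by
        refine ⟨zero_mem _, fun γ => ?_, fun γ' => ?_⟩
        · rw [map_zero]; exact zero_mem _
        · rw [map_zero, map_zero]; exact zero_mem _
      smul_mem' := by
        intro c x hx
        obtain ⟨hx1, hx2, hx3⟩ := hx
        rw [smul_eq_mul]
        refine ⟨Ideal.mul_mem_left _ c hx1, fun γ => ?_, fun γ' => ?_⟩
        · rw [map_mul]; exact Ideal.mul_mem_left _ _ (hx2 γ)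
        · rw [map_mul, map_mul]; exact Ideal.mul_mem_left _ _ (hx3 γ') }
  map_mem' := by
    intro m m' g x hx
    obtain ⟨hx1, hx2, hx3⟩ := hx
    refine ⟨T.map_mem' g hx1, fun γ => ?_, fun γ' => ?_⟩
    · have hcomp : (g ≫ γ.op) = (γ ≫ g.unop).op := rfl
      rw [← X_map_comp, hcomp]
      exact hx2 (γ ≫ g.unop)
    · have hcomp : (g ≫ γ'.op) = (γ' ≫ g.unop).op := rfl
      rw [← X_map_comp, hcomp]
      exact hx3 (γ' ≫ g.unop)
  le_max' m := fun x hx => T.le_max' m hx.1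

lemma mem_stepS {T : SIdeal A} {r : ℕ} {m : SimplexCategoryᵒᵖ} {x : lvl A m} :
    x ∈ (stepS T r).I m ↔ x ∈ T.I m ∧
      (∀ γ : (⦋r⦌ : SimplexCategory) ⟶ m.unop,
        ArtAlg.toAlg (A.X.map γ.op) x ∈ mT T r) ∧
      (∀ γ' : (⦋r+1⦌ : SimplexCategory) ⟶ m.unop,
        ArtAlg.toAlg (A.X.δ (0 : Fin (r+2))) (ArtAlg.toAlg (A.X.map γ'.op) x) ∈ mT T r) :=
  Iff.rfl

lemma stepS_le (T : SIdeal A) (r : ℕ) (m : SimplexCategoryᵒᵖ) :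
    (stepS T r).I m ≤ T.I m := fun _ hx => hx.1

lemma stepS_le_mT (T : SIdeal A) (r : ℕ) :
    (stepS T r).I (op ⦋r⦌) ≤ mT T r := by
  intro x hx
  have h := hx.2.1 (𝟙 (SimplexCategory.mk r))
  rwa [show (𝟙 (SimplexCategory.mk r)).op = 𝟙 (op (SimplexCategory.mk r)) from rfl, X_map_id]
    at h

lemma smul_le_stepS (T : SIdeal A) (r : ℕ) (m : SimplexCategoryᵒᵖ) :
    maximalIdeal (lvl A m) * T.I m ≤ (stepS T r).I m := by
  rw [Ideal.mul_le]
  intro a ha t ht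
  refine ⟨Ideal.mul_mem_left _ a ht, fun γ => ?_, fun γ' => ?_⟩
  · rw [map_mul]
    exact Ideal.mul_mem_mul (art_hom_mem_max (A.X.map γ.op) ha) (T.map_mem' γ.op ht)
  · rw [map_mul, map_mul]
    exact Ideal.mul_mem_mul
      (art_hom_mem_max (A.X.δ (0 : Fin (r+2))) (art_hom_mem_max (A.X.map γ'.op) ha))
      (T.d_mem (0 : Fin (r+2)) (T.map_mem' γ'.op ht))

end SEP
namespace SEP

open IsLocalRing

variable {Λ : Type} [CommRing Λ] [IsLocalRing Λ] [IsNoetherianRing Λ]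
  [IsAdicComplete (IsLocalRing.maximalIdeal Λ) Λ]

variable {A : SArtAlg Λ}

lemma stepS_fill (T : SIdeal A) (r : ℕ) (hlow : ∀ i, i < r → T.I (op ⦋i⦌) = ⊥)
    (hT : FillIdeal T) : FillIdeal (stepS T r) := by
  intro q η hη hcyc
  by_cases hη0 : η = 0
  · subst hη0
    exact ⟨0, zero_mem _, fun j => map_zero _, map_zero _⟩
  · have hqr : r ≤ q := by
      by_contra h
      push_neg at h
      have hbot : T.I (op ⦋q⦌) = ⊥ := hlow q h
      exact hη0 ((Submodule.mem_bot _).1 (hbot ▸ hη.1))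
    obtain ⟨w, hw0, hw1, hw2⟩ := hT q η hη.1 hcyc
    have hw2' : ∀ (u : Fin (q+2)), u = 0 →
        ArtAlg.toAlg (A.X.map (SimplexCategory.δ u).op) w = η := by
      intro u hu; subst hu; exact hw2
    have hw1' : ∀ (k : Fin (q+1)),
        ArtAlg.toAlg (A.X.map (SimplexCategory.δ k.succ).op) w = 0 := hw1
    refine ⟨w, ⟨hw0, ?_, ?_⟩, hw1, hw2⟩
    · -- condition (i)
      intro γ
      have hnsurj : ¬Function.Surjective γ.toOrderHom := by
        intro hs
        have hcard := Fintype.card_le_of_surjective _ hs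
        simp only [SimplexCategory.len_mk, Fintype.card_fin] at hcard
        omega
      obtain ⟨i, θ, hθ⟩ := SimplexCategory.eq_comp_δ_of_not_surjective γ hnsurj
      have himg : ArtAlg.toAlg (A.X.map γ.op) w
          = ArtAlg.toAlg (A.X.map θ.op)
              (ArtAlg.toAlg (A.X.map (SimplexCategory.δ i).op) w) := by
        rw [hθ, show (θ ≫ SimplexCategory.δ i).op = (SimplexCategory.δ i).op ≫ θ.op from rfl,
          X_map_comp]
      rw [himg]
      rcases Fin.eq_zero_or_eq_succ i with rfl | ⟨k, rfl⟩
      · rw [hw2' 0 rfl]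
        exact stepS_le_mT T r ((stepS T r).map_mem' θ.op hη)
      · rw [hw1' k, map_zero]
        exact zero_mem _
    · -- condition (ii)
      intro γ'
      by_cases hsurj : Function.Surjective γ'.toOrderHom
      · have hq : q ≤ r := by
          have hcard := Fintype.card_le_of_surjective _ hsurj
          simp only [SimplexCategory.len_mk, Fintype.card_fin] at hcard
          omega
        obtain rfl : q = r := le_antisymm hq hqr
        haveI : CategoryTheory.Epi γ' := SimplexCategory.epi_iff_surjective.2 hsurj
        have hid : γ' = 𝟙 _ := SimplexCategory.eq_id_of_epi γ'
        rw [hid, show (𝟙 ((op (SimplexCategory.mk (q+1))).unop)).op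
          = 𝟙 (op (SimplexCategory.mk (q+1))) from rfl, X_map_id]
        have hδw : ArtAlg.toAlg (A.X.δ (0 : Fin (q+2))) w = η := hw2
        rw [hδw]
        exact stepS_le_mT T q hη
      · obtain ⟨i, θ, hθ⟩ := SimplexCategory.eq_comp_δ_of_not_surjective γ' hsurj
        have himg : ArtAlg.toAlg (A.X.map γ'.op) w
            = ArtAlg.toAlg (A.X.map θ.op)
                (ArtAlg.toAlg (A.X.map (SimplexCategory.δ i).op) w) := by
          rw [hθ, show (θ ≫ SimplexCategory.δ i).op = (SimplexCategory.δ i).op ≫ θ.op from rfl,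
            X_map_comp]
        rw [himg]
        rcases Fin.eq_zero_or_eq_succ i with rfl | ⟨k, rfl⟩
        · rw [hw2' 0 rfl]
          have hmem := (stepS T r).map_mem' θ.op hη
          have hcond := hmem.2.2 (𝟙 (SimplexCategory.mk (r+1)))
          rwa [show (𝟙 (SimplexCategory.mk (r+1))).op
            = 𝟙 (op (SimplexCategory.mk (r+1))) from rfl, X_map_id] at hcond
        · rw [hw1' k, map_zero, map_zero]
          exact zero_mem _

end SEP
namespace SEP

open IsLocalRing

variable {Λ : Type} [CommRing Λ] [IsLocalRing Λ] [IsNoetherianRing Λ]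
  [IsAdicComplete (IsLocalRing.maximalIdeal Λ) Λ]

variable {A B : SArtAlg Λ}

open scoped Classical in
/-- The bottom degree of a simplicial ideal. -/
noncomputable def bot (T : SIdeal A) : ℕ :=
  if h : ∃ n : ℕ, T.I (op ⦋n⦌) ≠ ⊥ then Nat.find h else 0

/-- One step of the adaptive filtration. -/
noncomputable def step (T : SIdeal A) : SIdeal A := stepS T (bot T)

lemma bot_low (T : SIdeal A) : ∀ i, i < bot T → T.I (op ⦋i⦌) = ⊥ := by
  intro i hi
  classical
  rw [bot] at hi
  by_cases h : ∃ n : ℕ, T.I (op ⦋n⦌) ≠ ⊥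
  · rw [dif_pos h] at hi
    have := Nat.find_min h hi
    rwa [not_not] at this
  · rw [dif_neg h] at hi
    omega

lemma bot_eq (T : SIdeal A) (n : ℕ) (hne : T.I (op ⦋n⦌) ≠ ⊥)
    (hlow : ∀ i, i < n → T.I (op ⦋i⦌) = ⊥) : bot T = n := by
  classical
  have h : ∃ n : ℕ, T.I (op ⦋n⦌) ≠ ⊥ := ⟨n, hne⟩
  rw [bot, dif_pos h]
  rw [Nat.find_eq_iff]
  exact ⟨hne, fun k hk => by rw [not_not]; exact hlow k hk⟩

lemma step_fill (T : SIdeal A) (hT : FillIdeal T) : FillIdeal (step T) :=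
  stepS_fill T (bot T) (bot_low T) hT

lemma mT_lt (T : SIdeal A) (n : ℕ) (hne : T.I (op ⦋n⦌) ≠ ⊥) : mT T n < T.I (op ⦋n⦌) := by
  refine lt_of_le_of_ne Ideal.mul_le_right ?_
  intro heq
  obtain ⟨k, hk0, hnil⟩ := A.nilpotent
  have hpow : ∀ j : ℕ, maximalIdeal (lvl A (op ⦋n⦌)) ^ j * T.I (op ⦋n⦌) = T.I (op ⦋n⦌) := by
    intro j
    induction j with
    | zero => rw [pow_zero, Ideal.one_eq_top, Ideal.top_mul]
    | succ j IH =>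
      have heq' : maximalIdeal (lvl A (op ⦋n⦌)) * T.I (op ⦋n⦌) = T.I (op ⦋n⦌) := heq
      calc maximalIdeal (lvl A (op ⦋n⦌)) ^ (j+1) * T.I (op ⦋n⦌)
          = maximalIdeal (lvl A (op ⦋n⦌)) ^ j
              * (maximalIdeal (lvl A (op ⦋n⦌)) * T.I (op ⦋n⦌)) := by
            ring
        _ = maximalIdeal (lvl A (op ⦋n⦌)) ^ j * T.I (op ⦋n⦌) := by rw [heq']
        _ = T.I (op ⦋n⦌) := IH
  have := hpow k
  rw [hnil (op ⦋n⦌), Ideal.bot_mul] at this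
  exact hne this.symm

/-- The adaptive filtration of the kernel of `f`. -/
noncomputable def chainK (f : A ⟶ B) : ℕ → SIdeal A := fun j => match j with
  | 0 => kerS f
  | j + 1 => step (chainK f j)

lemma chainK_anti (f : A ⟶ B) {j j' : ℕ} (h : j ≤ j') (m : SimplexCategoryᵒᵖ) :
    (chainK f j').I m ≤ (chainK f j).I m := by
  induction j' with
  | zero =>
    have : j = 0 := by omega
    subst this; exact le_rfl
  | succ j' IH =>
    rcases Nat.lt_or_ge j (j'+1) with hlt | hge
    · exact le_trans (stepS_le _ _ m) (IH (by omega))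
    · have : j = j' + 1 := by omega
      subst this; exact le_rfl

lemma chainK_fill (f : A ⟶ B) (hf : SArtAlg.Surj f) (ha : SArtAlg.Acyclic f) :
    ∀ j, FillIdeal (chainK f j) := by
  intro j
  induction j with
  | zero => exact fill_of_acyclic f hf ha
  | succ j IH => exact step_fill _ IH

lemma chainK_kill (f : A ⟶ B) (n j₀ : ℕ)
    (hdead : ∀ i, i < n → (chainK f j₀).I (op ⦋i⦌) = ⊥) :
    ∃ j, j₀ ≤ j ∧ ∀ i, i ≤ n → (chainK f j).I (op ⦋i⦌) = ⊥ := by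
  classical
  set S : Set (Ideal (lvl A (op ⦋n⦌))) :=
    {P | ∃ j, j₀ ≤ j ∧ P = (chainK f j).I (op ⦋n⦌)} with hS
  have hwf : WellFounded ((· < ·) : Ideal (lvl A (op ⦋n⦌)) → Ideal (lvl A (op ⦋n⦌)) → Prop) :=
    IsWellFounded.wf
  obtain ⟨P, hPS, hPmin⟩ := hwf.has_min S ⟨(chainK f j₀).I (op ⦋n⦌), j₀, le_rfl, rfl⟩
  obtain ⟨jm, hjm, rfl⟩ := hPS
  by_cases hne : (chainK f jm).I (op ⦋n⦌) = ⊥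
  · refine ⟨jm, hjm, fun i hi => ?_⟩
    rcases Nat.lt_or_ge i n with hlt | hge
    · exact le_bot_iff.1 ((hdead i hlt) ▸ chainK_anti f hjm (op ⦋i⦌))
    · have : i = n := by omega
      subst this; exact hne
  · exfalso
    have hdead' : ∀ i, i < n → (chainK f jm).I (op ⦋i⦌) = ⊥ :=
      fun i hi => le_bot_iff.1 ((hdead i hi) ▸ chainK_anti f hjm (op ⦋i⦌))
    have hbot : bot (chainK f jm) = n := bot_eq _ n hne hdead'
    have hlt : (chainK f (jm + 1)).I (op ⦋n⦌) < (chainK f jm).I (op ⦋n⦌) := by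
      have h1 : (chainK f (jm + 1)).I (op ⦋n⦌) ≤ mT (chainK f jm) n := by
        show (stepS (chainK f jm) (bot (chainK f jm))).I (op ⦋n⦌) ≤ mT (chainK f jm) n
        rw [hbot]
        exact stepS_le_mT _ n
      exact lt_of_le_of_lt h1 (mT_lt _ n hne)
    exact hPmin _ ⟨jm + 1, by omega, rfl⟩ hlt

lemma chainK_vanish (f : A ⟶ B) : ∀ m, ∃ j, (chainK f j).I m = ⊥ := by
  have claim : ∀ n : ℕ, ∃ j, ∀ i, i ≤ n → (chainK f j).I (op ⦋i⦌) = ⊥ := by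
    intro n
    induction n with
    | zero =>
      obtain ⟨j, _, hj⟩ := chainK_kill f 0 0 (fun i hi => absurd hi (by omega))
      exact ⟨j, hj⟩
    | succ n IH =>
      obtain ⟨j₀, hj₀⟩ := IH
      obtain ⟨j, _, hj⟩ := chainK_kill f (n+1) j₀ (fun i hi => hj₀ i (by omega))
      exact ⟨j, hj⟩
  intro m
  induction m using Opposite.rec with | op Δ => ?_
  obtain ⟨j, hj⟩ := claim Δ.len
  have h' := hj Δ.len le_rfl
  rw [SimplexCategory.mk_len] at h'
  exact ⟨j, h'⟩

/-- The adaptive tower data for an acyclic surjection. -/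
noncomputable def acyData (f : A ⟶ B) : TowerData f where
  K := chainK f
  hK0 := fun _ => rfl
  hmono := fun j m => stepS_le _ _ m
  hsmall := fun j m => smul_le_stepS _ _ m
  hvanish := chainK_vanish f

theorem part2 (f : A ⟶ B) (hf : SArtAlg.Surj f) (ha : SArtAlg.Acyclic f) :
    ∃ T : TowerFactorisation f, ∀ j, SArtAlg.AcySmallExt (T.g j) :=
  ⟨(acyData f).tower hf, fun j =>
    (acyData f).g_acysmall hf (chainK_fill f hf ha) j⟩

end SEP

/-- Lemma 1.8: every surjection in `sC_Λ` is a (possibly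
transfinite inverse limit of a) composition of small extensions, and every
acyclic surjection is a composition of acyclic small extensions. -/
theorem surjection_factors_into_small_extensions :
    (∀ {A B : SArtAlg Λ} (f : A ⟶ B), SArtAlg.Surj f →
      ∃ T : TowerFactorisation f, ∀ j, SArtAlg.SmallExt (T.g j)) ∧
    (∀ {A B : SArtAlg Λ} (f : A ⟶ B), SArtAlg.Surj f → SArtAlg.Acyclic f →
      ∃ T : TowerFactorisation f, ∀ j, SArtAlg.AcySmallExt (T.g j)) := by
  exact ⟨fun f hf => SEP.part1 f hf, fun f hf ha => SEP.part2 f hf ha⟩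

end Statement1
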